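/- arXiv:2506.06893 — 4 statements merged into one kernel-verified Lean document; each statement's English description precedes it below -/
import Mathlib

section
/- Let D ≥ 1 be an integer, c > 0 a real number, and H(D) = ∑_{i=1}^{D} 1/i the D-th harmonic number. If x_1, ..., x_D are nonnegative reals satisfying ∑_{i=1}^{d} i·x_i > c·d / H(D) for every d ∈ {1, ..., D}, then ∑_{i=1}^{D} x_i > c. -/
open Finset

noncomputable def gg (D d : ℕ) : ℝ := if d ≤ D then (1:ℝ)/d else 0

lemma tele (g : ℕ → ℝ) (i D : ℕ) (h : i ≤ D) :
    ∑ d ∈ Finset.Icc i D, (g d - g (d + 1)) = g i - g (D + 1) := by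
  induction D, h using Nat.le_induction with
  | base => simp
  | succ n hn ih =>
      rw [Finset.sum_Icc_succ_top (by omega), ih]
      ring

lemma swap_lemma (D : ℕ) (F : ℕ → ℕ → ℝ) :
    ∑ d ∈ Finset.Icc 1 D, ∑ i ∈ Finset.Icc 1 d, F i d
      = ∑ i ∈ Finset.Icc 1 D, ∑ d ∈ Finset.Icc i D, F i d := by
  rw [Finset.sum_sigma', Finset.sum_sigma']
  apply Finset.sum_nbij' (fun p => ⟨p.2, p.1⟩) (fun p => ⟨p.2, p.1⟩) <;>
    simp +contextual [Finset.mem_sigma, Finset.mem_Icc] <;> omega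

lemma key (D : ℕ) (y : ℕ → ℝ) :
    ∑ i ∈ Finset.Icc 1 D, y i
      = ∑ d ∈ Finset.Icc 1 D, (gg D d - gg D (d + 1)) * ∑ i ∈ Finset.Icc 1 d, (i : ℝ) * y i := by
  have h1 : ∑ d ∈ Finset.Icc 1 D, (gg D d - gg D (d+1)) * ∑ i ∈ Finset.Icc 1 d, (i : ℝ) * y i
      = ∑ d ∈ Finset.Icc 1 D, ∑ i ∈ Finset.Icc 1 d, (gg D d - gg D (d+1)) * ((i:ℝ) * y i) := by
    simp [Finset.mul_sum]
  rw [h1, swap_lemma]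
  apply Finset.sum_congr rfl
  intro i hi
  simp only [Finset.mem_Icc] at hi
  rw [← Finset.sum_mul, tele (gg D) i D hi.2]
  have h1 : gg D i = 1 / i := by simp [gg, hi.2]
  have h2 : gg D (D + 1) = 0 := by simp [gg]
  have hi0 : (i : ℝ) ≠ 0 := Nat.cast_ne_zero.mpr (by omega)
  rw [h1, h2]
  field_simp
  ring

theorem stmt_2 (D : ℕ) (hD : 1 ≤ D) (c : ℝ) (hc : 0 < c) (x : ℕ → ℝ)
    (hx : ∀ i ∈ Finset.Icc 1 D, 0 ≤ x i)
    (h : ∀ d ∈ Finset.Icc 1 D,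
      c * (d : ℝ) / (∑ i ∈ Finset.Icc 1 D, (1 : ℝ) / i) <
        ∑ i ∈ Finset.Icc 1 d, (i : ℝ) * x i) :
    c < ∑ i ∈ Finset.Icc 1 D, x i := by
  set H : ℝ := ∑ i ∈ Finset.Icc 1 D, (1 : ℝ) / i with hH
  have hHpos : 0 < H := by
    apply Finset.sum_pos
    · intro i hi
      simp only [Finset.mem_Icc] at hi
      exact one_div_pos.mpr (Nat.cast_pos.mpr (by omega))
    · exact ⟨1, by simp [Finset.mem_Icc]; omega⟩
  set w : ℕ → ℝ := fun d => gg D d - gg D (d + 1) with hw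
  have hwnn : ∀ d ∈ Finset.Icc 1 D, 0 ≤ w d := by
    intro d hd
    simp only [Finset.mem_Icc] at hd
    simp only [hw, gg, hd.2, if_pos]
    by_cases hdd : d + 1 ≤ D
    · rw [if_pos hdd]
      have hd0 : (0:ℝ) < d := Nat.cast_pos.mpr (by omega)
      have hd1 : (0:ℝ) < ((d:ℕ) + 1 : ℕ) := Nat.cast_pos.mpr (by omega)
      rw [sub_nonneg]
      apply one_div_le_one_div_of_le hd0
      push_cast
      linarith
    · rw [if_neg hdd]
      simp only [sub_zero]
      positivity
  have hwD : 0 < w D := by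
    simp only [hw, gg, le_refl, if_pos]
    rw [if_neg (by omega)]
    have hd0 : (0:ℝ) < D := Nat.cast_pos.mpr (by omega)
    simp only [sub_zero]
    positivity
  have hHsum : H = ∑ d ∈ Finset.Icc 1 D, w d * d := by
    have hk := key D (fun i => (1:ℝ)/i)
    rw [hH, hk]
    apply Finset.sum_congr rfl
    intro d hd
    simp only [Finset.mem_Icc] at hd
    congr 1
    have he : ∑ i ∈ Finset.Icc 1 d, (i:ℝ) * (1/i) = ∑ i ∈ Finset.Icc 1 d, (1:ℝ) := by
      apply Finset.sum_congr rfl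
      intro i hi
      simp only [Finset.mem_Icc] at hi
      have : (i:ℝ) ≠ 0 := Nat.cast_ne_zero.mpr (by omega)
      field_simp
    rw [he]
    simp [Nat.card_Icc]
  rw [key D x]
  have hlt : ∑ d ∈ Finset.Icc 1 D, w d * (c * d / H)
      < ∑ d ∈ Finset.Icc 1 D, w d * ∑ i ∈ Finset.Icc 1 d, (i:ℝ) * x i := by
    apply Finset.sum_lt_sum
    · intro d hd
      exact mul_le_mul_of_nonneg_left (le_of_lt (h d hd)) (hwnn d hd)
    · refine ⟨D, by simp [Finset.mem_Icc]; omega, ?_⟩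
      exact mul_lt_mul_of_pos_left (h D (by simp [Finset.mem_Icc]; omega)) hwD
  refine lt_of_le_of_lt (le_of_eq ?_) hlt
  have heq : ∑ d ∈ Finset.Icc 1 D, w d * (c * d / H)
      = (c / H) * ∑ d ∈ Finset.Icc 1 D, w d * d := by
    rw [Finset.mul_sum]
    apply Finset.sum_congr rfl
    intro d hd
    ring
  rw [heq, ← hHsum, div_mul_cancel₀ c (ne_of_gt hHpos)]
end

section
/- Let D ≥ 1 be an integer and suppose λ_D ∈ (0,1) satisfies ∏_{k=1}^{D} (1 - λ_D/k) = e^{-1}. Then 1/λ_D ≤ H(D) + 2, where H(D) = ∑_{k=1}^{D} 1/k is the D-th harmonic number. -/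
theorem stmt_5 (D : ℕ) (hD : 1 ≤ D) (lam : ℝ) (hlam : lam ∈ Set.Ioo (0 : ℝ) 1)
    (h : ∏ k ∈ Finset.Icc 1 D, (1 - lam / (k : ℝ)) = Real.exp (-1)) :
    1 / lam ≤ (∑ k ∈ Finset.Icc 1 D, (1 : ℝ) / k) + 2 := by
  obtain ⟨hl0, hl1⟩ := hlam
  set H := ∑ k ∈ Finset.Icc 1 D, (1 : ℝ) / k with hH
  have hk1 : ∀ k ∈ Finset.Icc 1 D, (1 : ℝ) ≤ (k : ℝ) := by
    intro k hk
    exact_mod_cast (Finset.mem_Icc.mp hk).1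
  have hfac : ∀ k ∈ Finset.Icc 1 D, (0 : ℝ) < 1 - lam / k := by
    intro k hk
    have h1 := hk1 k hk
    have hle : lam / k ≤ lam := by
      rw [div_le_iff₀ (by linarith)]
      nlinarith
    linarith
  have hlog : ∑ k ∈ Finset.Icc 1 D, Real.log (1 - lam / k) = -1 := by
    rw [← Real.log_prod (fun k hk => (hfac k hk).ne'), h, Real.log_exp]
  have key : ∀ k ∈ Finset.Icc 1 D,
      -(lam / (1 - lam)) * (1 / k) ≤ Real.log (1 - lam / k) := by
    intro k hk
    have h1 := hk1 k hk
    have hp := hfac k hk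
    have hlb : 1 - (1 - lam / k)⁻¹ ≤ Real.log (1 - lam / k) := by
      have := Real.log_le_sub_one_of_pos (x := (1 - lam / k)⁻¹) (by positivity)
      rw [Real.log_inv] at this
      linarith
    have hk0 : (0 : ℝ) < k := by linarith
    have h2 : -(lam / (1 - lam)) * (1 / k) ≤ 1 - (1 - lam / k)⁻¹ := by
      rw [inv_eq_one_div]
      have hkl : (k : ℝ) - lam ≠ 0 := by nlinarith
      have hq : (1 : ℝ) - 1 / (1 - lam / k) = -((lam / k) / (1 - lam / k)) := by
        field_simp
        ring
      rw [hq]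
      have hnum : (0 : ℝ) ≤ lam / k := by positivity
      have hden : (0 : ℝ) < 1 - lam ∧ 1 - lam ≤ 1 - lam / k := by
        constructor
        · linarith
        · have : lam / k ≤ lam := by
            rw [div_le_iff₀ hk0]; nlinarith
          linarith
      have : (lam / k) / (1 - lam / k) ≤ (lam / k) / (1 - lam) :=
        div_le_div_of_nonneg_left hnum hden.1 (by linarith [hden.2])
      have heq : -(lam / (1 - lam)) * (1 / k) = -((lam / k) / (1 - lam)) := by
        field_simp
      rw [heq]
      linarith
    linarith
  have hsum : -(lam / (1 - lam)) * H ≤ -1 := by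
    rw [← hlog, hH, Finset.mul_sum]
    exact Finset.sum_le_sum key
  have h1l : (0 : ℝ) < 1 - lam := by linarith
  have hmain : 1 - lam ≤ lam * H := by
    have := mul_le_mul_of_nonneg_right hsum h1l.le
    have hexp : -(lam / (1 - lam)) * H * (1 - lam) = -(lam * H) := by
      field_simp
    nlinarith [hexp ▸ this]
  rw [div_le_iff₀ hl0]
  nlinarith
end

section
/- Let c ≥ 1 be an integer, s an integer with 0 ≤ s ≤ c, and Ψ : [0,1] → ℝ a convex function with Ψ(1) = 0. Suppose a_1, ..., a_s are reals with 1/c ≤ a_ℓ ≤ (c - ℓ + 1)/c for every ℓ ∈ {1, ..., s}. Then ∑_{ℓ=1}^{s} (Ψ(a_ℓ - 1/c) - Ψ(a_ℓ)) ≥ Ψ((c - s)/c). -/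
/-- Four-point inequality for convex functions. -/
lemma four_point {Ψ : ℝ → ℝ} (hconv : ConvexOn ℝ (Set.Icc (0 : ℝ) 1) Ψ)
    {u v w z : ℝ} (hu : u ∈ Set.Icc (0:ℝ) 1) (hv : v ∈ Set.Icc (0:ℝ) 1)
    (hw : w ∈ Set.Icc (0:ℝ) 1) (hz : z ∈ Set.Icc (0:ℝ) 1)
    (huv : u < v) (huw : u ≤ w) (hvz : v ≤ z) (hwz : w < z) (heq : v - u = z - w) :
    Ψ w - Ψ z ≤ Ψ u - Ψ v := by
  have huz : u < z := lt_of_le_of_lt huw hwz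
  have h1 : (Ψ v - Ψ u) / (v - u) ≤ (Ψ z - Ψ u) / (z - u) :=
    hconv.secant_mono hu hv hz huv.ne' huz.ne' hvz
  have h2 : (Ψ u - Ψ z) / (u - z) ≤ (Ψ w - Ψ z) / (w - z) :=
    hconv.secant_mono hz hu hw huz.ne hwz.ne huw
  have h3 : (Ψ z - Ψ u) / (z - u) = (Ψ u - Ψ z) / (u - z) := by
    rw [← neg_div_neg_eq]; ring_nf
  have h4 : (Ψ v - Ψ u) / (v - u) ≤ (Ψ w - Ψ z) / (w - z) :=
    calc (Ψ v - Ψ u) / (v - u) ≤ (Ψ z - Ψ u) / (z - u) := h1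
    _ = (Ψ u - Ψ z) / (u - z) := h3
    _ ≤ (Ψ w - Ψ z) / (w - z) := h2
  have hvu : (0:ℝ) < v - u := by linarith
  have hwzeq : w - z = -(v - u) := by linarith
  rw [hwzeq, div_neg, div_le_iff₀ hvu, neg_mul, div_mul_cancel₀ _ hvu.ne'] at h4
  linarith

theorem stmt_13 (c : ℕ) (hc : 1 ≤ c) (s : ℕ) (hs : s ≤ c)
    (Ψ : ℝ → ℝ) (hconv : ConvexOn ℝ (Set.Icc (0 : ℝ) 1) Ψ) (hΨ1 : Ψ 1 = 0)
    (a : ℕ → ℝ)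
    (ha : ∀ ℓ ∈ Finset.Icc 1 s,
      1 / (c : ℝ) ≤ a ℓ ∧ a ℓ ≤ ((c : ℝ) - ℓ + 1) / c) :
    Ψ (((c : ℝ) - s) / c) ≤
      ∑ ℓ ∈ Finset.Icc 1 s, (Ψ (a ℓ - 1 / (c : ℝ)) - Ψ (a ℓ)) := by
  have hcR : (0:ℝ) < c := by exact_mod_cast hc
  induction s with
  | zero =>
      simp only [Finset.Icc_self, Nat.cast_zero, sub_zero]
      rw [div_self hcR.ne']
      simp [hΨ1]
  | succ n ih =>
      have hn : n ≤ c := le_of_lt (Nat.lt_of_lt_of_le (Nat.lt_succ_self n) hs)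
      have ihn := ih hn (fun ℓ hℓ => ha ℓ (Finset.mem_Icc.mpr
        ⟨(Finset.mem_Icc.mp hℓ).1, le_trans (Finset.mem_Icc.mp hℓ).2 (Nat.le_succ n)⟩))
      rw [Finset.sum_Icc_succ_top (Nat.le_add_left 1 n)]
      obtain ⟨hb1, hb2⟩ := ha (n+1) (Finset.mem_Icc.mpr ⟨Nat.le_add_left 1 n, le_refl _⟩)
      push_cast at hb2
      have hnc : (n:ℝ) + 1 ≤ c := by exact_mod_cast hs
      have hn0 : (0:ℝ) ≤ n := Nat.cast_nonneg n
      have hb2' : a (n+1) ≤ ((c:ℝ) - n)/c := by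
        have : ((c:ℝ) - (n+1) + 1)/c = ((c:ℝ) - n)/c := by ring_nf
        linarith [this ▸ hb2]
      have hdiv1 : ((c:ℝ) - n)/c ≤ 1 := by rw [div_le_one hcR]; linarith
      have key : Ψ (((c:ℝ) - n - 1)/c) - Ψ (((c:ℝ) - n)/c) ≤
          Ψ (a (n+1) - 1/(c:ℝ)) - Ψ (a (n+1)) := by
        have e2 : ((c:ℝ) - n)/c - 1/c = ((c:ℝ) - n - 1)/c := by ring
        rcases eq_or_lt_of_le hb2' with heq | hlt
        · rw [heq, e2]
        · have h1c : (0:ℝ) < 1/c := by positivity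
          apply four_point hconv
          · exact ⟨by linarith, by linarith⟩
          · exact ⟨by linarith, by linarith⟩
          · exact ⟨by apply div_nonneg _ hcR.le; linarith, by rw [div_le_one hcR]; linarith⟩
          · exact ⟨by apply div_nonneg _ hcR.le; linarith, by rw [div_le_one hcR]; linarith⟩
          · linarith
          · linarith [e2, hb2']
          · exact hb2'
          · rw [div_lt_div_iff₀ hcR hcR]; nlinarith
          · ring
      have goal_eq : ((c:ℝ) - (n+1 : ℕ))/c = ((c:ℝ) - n - 1)/c := by push_cast; ring_nf
      rw [goal_eq]
      linarith
end

section
/- Let β ≥ 1, η ≥ 0, and c ≥ 1 be real numbers, and define Ψ(x) = η·(β^{1-x} - 1) with derivative Ψ'(x) = -η·(ln β)·β^{1-x}. Then for every x ∈ [0, 1], ln(β)·Ψ(x) + Ψ'(x - 1/c) ≥ -η·(ln β)·(1 + β·(β^{1/c} - 1)). -/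
theorem stmt_15 (β η c : ℝ) (hβ : 1 ≤ β) (hη : 0 ≤ η) (hc : 1 ≤ c)
    (x : ℝ) (hx : x ∈ Set.Icc (0 : ℝ) 1) :
    -η * Real.log β * (1 + β * (β ^ ((1 : ℝ) / c) - 1)) ≤
      Real.log β * (η * (β ^ ((1 : ℝ) - x) - 1)) +
        (-η * Real.log β * β ^ ((1 : ℝ) - (x - 1 / c))) := by
  obtain ⟨hx0, hx1⟩ := hx
  have hβ0 : (0:ℝ) < β := lt_of_lt_of_le one_pos hβ
  have hL : 0 ≤ Real.log β := Real.log_nonneg hβ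
  have h1 : β ^ ((1:ℝ) - (x - 1/c)) = β ^ ((1:ℝ)-x) * β ^ ((1:ℝ)/c) := by
    rw [← Real.rpow_add hβ0]; ring_nf
  have h2 : β ^ ((1:ℝ)-x) ≤ β := by
    calc β ^ ((1:ℝ)-x) ≤ β ^ (1:ℝ) :=
          Real.rpow_le_rpow_of_exponent_le hβ (by linarith)
      _ = β := Real.rpow_one β
  have h3 : 1 ≤ β ^ ((1:ℝ)/c) :=
    Real.one_le_rpow hβ (by positivity)
  have h4 : β ^ ((1:ℝ)-x) * (β ^ ((1:ℝ)/c) - 1) ≤ β * (β ^ ((1:ℝ)/c) - 1) :=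
    mul_le_mul_of_nonneg_right h2 (by linarith)
  rw [h1]
  nlinarith [mul_le_mul_of_nonneg_left h4 (mul_nonneg hη hL), mul_nonneg hη hL]
end
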